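/- Under the dual averaging recursion of the previous statement (with loss models $v_t$, iterates $x_t = Q(\eta_t y_t)$, $y_{t+1} = y_t - v_t$), for any comparator $p \in \mathrm{dom}\,h$ and true losses $\ell_t$ with error $\epsilon_t = v_t - \ell_t$, the regret $R_p(T) = \sum_{t=1}^T \langle \ell_t, x_t - p\rangle$ satisfies $R_p(T) \le \eta_{T+1}^{-1}[h(p) - \min h] + \sum_{t=1}^T \langle \epsilon_t, p - x_t\rangle + \tfrac{1}{2K}\sum_{t=1}^T \eta_t \|v_t\|_*^2$. -/

import Mathlib

open Finset

set_option maxHeartbeats 1600000 in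
/-- template regret bound for dual averaging with inexact loss
models, obtained by telescoping the energy recursion. -/
theorem dual_averaging_regret_bound
    {V : Type*} [NormedAddCommGroup V] [NormedSpace ℝ V]
    (D : Set V) (hD : D.Nonempty)
    (h : V → ℝ) (K : ℝ) (hK : 0 < K)
    (hconv : ConvexOn ℝ D h)
    (hstrong : ∀ x ∈ D, ∀ x' ∈ D, ∀ t ∈ Set.Icc (0:ℝ) 1,
      h (t • x + (1 - t) • x')
        ≤ t * h x + (1 - t) * h x' - (K / 2) * t * (1 - t) * ‖x - x'‖ ^ 2)
    (hstar : (V →L[ℝ] ℝ) → ℝ) (Q : (V →L[ℝ] ℝ) → V)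
    (hQmem : ∀ z, Q z ∈ D)
    (hsup : ∀ z, ∀ x ∈ D, z x - h x ≤ hstar z)
    (hatt : ∀ z, hstar z = z (Q z) - h (Q z))
    (m : ℝ) (hmin : IsLeast (h '' D) m)
    (η : ℕ → ℝ) (hη : ∀ t, 0 < η t) (hmono : ∀ t, η (t + 1) ≤ η t)
    -- loss models `v t`, true losses `ℓ t`, errors `ε t`, scores, iterates
    (v ℓ ε y : ℕ → V →L[ℝ] ℝ) (x : ℕ → V)
    (hε : ∀ t, ε t = v t - ℓ t)
    (hy1 : y 1 = 0) (hyrec : ∀ t, y (t + 1) = y t - v t)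
    (hx : ∀ t, x t = Q (η t • y t))
    (p : V) (hp : p ∈ D) (T : ℕ) :
    ∑ t ∈ Finset.Icc 1 T, (ℓ t) (x t - p)
      ≤ (η (T + 1))⁻¹ * (h p - m)
        + ∑ t ∈ Finset.Icc 1 T, (ε t) (p - x t)
        + (1 / (2 * K)) * ∑ t ∈ Finset.Icc 1 T, η t * ‖v t‖ ^ 2 := by
  classical
  obtain ⟨⟨x0, hx0D, hx0⟩, hub⟩ := hmin
  have hmle : ∀ w ∈ D, m ≤ h w := fun w hw => hub ⟨w, hw, rfl⟩
  -- key gradient (strong-convexity) inequality at the argmax point Q z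
  have key : ∀ z : V →L[ℝ] ℝ, ∀ x' ∈ D,
      z x' - z (Q z) + (K/2) * ‖x' - Q z‖^2 ≤ h x' - h (Q z) := by
    intro z x' hx'
    refine le_of_forall_pos_le_add ?_
    intro ε hεpos
    set xq := Q z with hxqdef
    have hxqD : xq ∈ D := hQmem z
    set A := (K/2) * ‖x' - xq‖^2 with hAdef
    have hA0 : 0 ≤ A := by positivity
    have h1A : (0:ℝ) < 1 + A := by linarith
    set t := min 1 (ε / (1 + A)) with htdef
    have ht0 : 0 < t := lt_min one_pos (div_pos hεpos h1A)
    have ht1 : t ≤ 1 := min_le_left _ _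
    have hqD : t • x' + (1 - t) • xq ∈ D :=
      hconv.1 hx' hxqD ht0.le (by linarith) (by ring)
    have hs := hstrong x' hx' xq hxqD t ⟨ht0.le, ht1⟩
    have hsup' := hsup z _ hqD
    rw [hatt z, ← hxqdef] at hsup'
    have hlin : z (t • x' + (1 - t) • xq) = t * z x' + (1 - t) * z xq := by
      simp [map_add, map_smul, smul_eq_mul]
    rw [hlin] at hsup'
    have h2 : t * (z x' - z xq)
        ≤ t * (h x' - h xq) - (K/2)*t*(1-t)*‖x' - xq‖^2 := by nlinarith [hs, hsup']
    have h3 : z x' - z xq ≤ h x' - h xq - (K/2)*(1-t)*‖x' - xq‖^2 := by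
      nlinarith [h2, ht0]
    have htA : t * A ≤ ε := by
      have htr : t ≤ ε / (1 + A) := min_le_right _ _
      calc t * A ≤ (ε / (1+A)) * (1 + A) :=
            mul_le_mul htr (by linarith) hA0 (le_of_lt (div_pos hεpos h1A))
        _ = ε := div_mul_cancel₀ ε (ne_of_gt h1A)
    rw [hAdef] at htA ⊢
    linarith [h3, htA]
  -- smoothness of the conjugate
  have smooth : ∀ z w : V →L[ℝ] ℝ,
      hstar (z + w) ≤ hstar z + w (Q z) + ‖w‖^2 / (2*K) := by
    intro z w
    have hk := key z (Q (z+w)) (hQmem _)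
    rw [hatt (z+w), hatt z]
    set a := ‖Q (z+w) - Q z‖ with hadef
    have ha0 : 0 ≤ a := norm_nonneg _
    have hb : w (Q (z+w)) - w (Q z) ≤ ‖w‖ * a := by
      have h1 : w (Q (z+w)) - w (Q z) = w (Q (z+w) - Q z) := (map_sub w _ _).symm
      have h2 := w.le_opNorm (Q (z+w) - Q z)
      rw [Real.norm_eq_abs] at h2
      rw [h1]
      exact le_trans (le_abs_self _) h2
    have hq : ‖w‖ * a - (K/2) * a^2 ≤ ‖w‖^2 / (2*K) := by
      rw [le_div_iff₀ (by positivity : (0:ℝ) < 2*K)]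
      nlinarith [sq_nonneg (K * a - ‖w‖)]
    have hadd : (z+w) (Q (z+w)) = z (Q (z+w)) + w (Q (z+w)) := rfl
    rw [hadd]
    linarith [hk, hb, hq]
  -- monotonicity in the step size
  have mono : ∀ (z : V →L[ℝ] ℝ) (a b : ℝ), 0 < a → a ≤ b →
      a⁻¹ * (hstar (a • z) + m) ≤ b⁻¹ * (hstar (b • z) + m) := by
    intro z a b ha hab
    have hb : 0 < b := lt_of_lt_of_le ha hab
    set q := Q (a • z) with hqdef
    have hqD : q ∈ D := hQmem _
    have h1 : hstar (a • z) = a * z q - h q := by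
      rw [hatt]; simp [ContinuousLinearMap.smul_apply, smul_eq_mul]; rfl
    have h2 : b * z q - h q ≤ hstar (b • z) := by
      have := hsup (b • z) q hqD
      simpa [ContinuousLinearMap.smul_apply, smul_eq_mul] using this
    have hm0 : 0 ≤ h q - m := by linarith [hmle q hqD]
    have hinv : b⁻¹ ≤ a⁻¹ := by
      apply inv_anti₀ ha hab
    have hinvb : (0:ℝ) ≤ b⁻¹ := by positivity
    have e1 : a⁻¹ * (hstar (a • z) + m) = z q - a⁻¹ * (h q - m) := by
      rw [h1]
      linear_combination z q * inv_mul_cancel₀ ha.ne'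
    have e2 : z q - b⁻¹ * (h q - m) ≤ b⁻¹ * (hstar (b • z) + m) := by
      have hmul : b⁻¹ * (b * z q - h q + m) ≤ b⁻¹ * (hstar (b • z) + m) :=
        mul_le_mul_of_nonneg_left (by linarith) hinvb
      have e3 : b⁻¹ * (b * z q - h q + m) = z q - b⁻¹ * (h q - m) := by
        linear_combination z q * inv_mul_cancel₀ hb.ne'
      linarith [hmul, e3.symm.le, e3.le]
    rw [e1]
    nlinarith [hinv, hm0, e2]
  -- the energy
  set E : ℕ → ℝ := fun t =>
    (η t)⁻¹ * (hstar (η t • y t) + m) + (η t)⁻¹ * (h p - m) - y t p with hE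
  clear_value E
  have Enonneg : ∀ t, 0 ≤ E t := by
    intro t
    have hs := hsup (η t • y t) p hp
    have hs' : η t * y t p - h p ≤ hstar (η t • y t) := by
      simpa [ContinuousLinearMap.smul_apply, smul_eq_mul] using hs
    have hc : (0:ℝ) ≤ (η t)⁻¹ := inv_nonneg.mpr (hη t).le
    have h0 : (η t)⁻¹ * (η t * y t p) = y t p := by
      rw [← mul_assoc, inv_mul_cancel₀ (hη t).ne', one_mul]
    simp only [hE]
    linarith [mul_le_mul_of_nonneg_left hs' hc, h0]
  have hQ0 : h (Q 0) = m := by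
    have h1 : hstar (0 : V →L[ℝ] ℝ) = - h (Q 0) := by rw [hatt]; simp
    have h2 : - h x0 ≤ hstar (0 : V →L[ℝ] ℝ) := by
      have := hsup 0 x0 hx0D; simpa using this
    have : h (Q 0) ≤ m := by rw [← hx0]; linarith [h1, h2]
    exact le_antisymm this (hmle _ (hQmem 0))
  have hE1 : E 1 = (η 1)⁻¹ * (h p - m) := by
    simp only [hE, hy1]
    rw [smul_zero]
    have h1 : hstar (0 : V →L[ℝ] ℝ) = -m := by rw [hatt]; simp [hQ0]
    rw [h1]
    simp
  -- per-step energy recursion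
  have step : ∀ t, E (t+1) ≤ E t + v t (p - x t)
      + ((η (t+1))⁻¹ - (η t)⁻¹) * (h p - m) + (1/(2*K)) * (η t * ‖v t‖^2) := by
    intro t
    have hη1 := hη t
    have hη2 := hη (t+1)
    have m1 : (η (t+1))⁻¹ * (hstar (η (t+1) • y (t+1)) + m)
        ≤ (η t)⁻¹ * (hstar (η t • y (t+1)) + m) := mono (y (t+1)) _ _ hη2 (hmono t)
    have hw : η t • y (t+1) = (η t • y t) + ((-(η t)) • v t) := by
      rw [hyrec t]; module
    have m2 : hstar (η t • y (t+1))
        ≤ hstar (η t • y t) + ((-(η t)) • v t) (x t) + ‖(-(η t)) • v t‖^2/(2*K) := by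
      rw [hw, hx t]
      exact smooth _ _
    have e1 : ((-(η t)) • v t) (x t) = -(η t * v t (x t)) := by
      simp [ContinuousLinearMap.smul_apply, smul_eq_mul]
    have e2 : ‖(-(η t)) • v t‖^2 ≤ (η t)^2 * ‖v t‖^2 := by
      have h1 : ‖(-(η t)) • v t‖ ≤ ‖(-(η t))‖ * ‖v t‖ :=
        ContinuousLinearMap.opNorm_smul_le _ _
      rw [Real.norm_eq_abs, abs_neg, abs_of_pos hη1] at h1
      nlinarith [norm_nonneg ((-(η t)) • v t), norm_nonneg (v t)]
    have hdd : ‖(-(η t)) • v t‖^2/(2*K) ≤ (η t)^2 * ‖v t‖^2/(2*K) := by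
      rw [div_eq_mul_inv, div_eq_mul_inv]
      exact mul_le_mul_of_nonneg_right e2
        (inv_nonneg.mpr (by linarith : (0:ℝ) ≤ 2*K))
    have hc : (0:ℝ) ≤ (η t)⁻¹ := inv_nonneg.mpr hη1.le
    have m2' : hstar (η t • y (t+1)) + m
        ≤ hstar (η t • y t) + -(η t * v t (x t)) + (η t)^2 * ‖v t‖^2/(2*K) + m := by
      linarith [m2, hdd, e1.le, e1.symm.le]
    have m3 : (η t)⁻¹ * (hstar (η t • y (t+1)) + m)
        ≤ (η t)⁻¹ * (hstar (η t • y t) + m) - v t (x t) + (1/(2*K)) * (η t * ‖v t‖^2) := by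
      have hmul := mul_le_mul_of_nonneg_left m2' hc
      have e3 : (η t)⁻¹ * (hstar (η t • y t) + -(η t * v t (x t)) + (η t)^2 * ‖v t‖^2/(2*K) + m)
          = (η t)⁻¹ * (hstar (η t • y t) + m) - v t (x t) + (1/(2*K)) * (η t * ‖v t‖^2) := by
        field_simp
        ring
      linarith [hmul, e3.le, e3.symm.le]
    have ey : y (t+1) p = y t p - v t p := by rw [hyrec]; simp
    have ev : v t (p - x t) = v t p - v t (x t) := map_sub _ _ _
    simp only [hE]
    rw [ey]
    linarith [m1, m3, ev.le, ev.symm.le]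
  -- telescoping by induction
  have main : ∀ N : ℕ, E (N+1) + ∑ t ∈ Finset.Icc 1 N, v t (x t - p)
      ≤ (η (N+1))⁻¹ * (h p - m) + (1/(2*K)) * ∑ t ∈ Finset.Icc 1 N, η t * ‖v t‖^2 := by
    intro N
    induction N with
    | zero => simp [hE1]
    | succ n ih =>
      rw [Finset.sum_Icc_succ_top (Nat.le_add_left 1 n),
        Finset.sum_Icc_succ_top (Nat.le_add_left 1 n)]
      have hs := step (n+1)
      have ev : v (n+1) (x (n+1) - p) = -(v (n+1) (p - x (n+1))) := by
        rw [map_sub, map_sub]; ring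
      linarith [hs, ih, ev.le, ev.symm.le]
  -- conclude
  have hfin : ∀ t, ℓ t (x t - p) = v t (x t - p) + ε t (p - x t) := by
    intro t
    have hℓ : ℓ t = v t - ε t := by rw [hε t]; abel
    rw [hℓ]
    simp only [ContinuousLinearMap.sub_apply, map_sub]
    ring
  have hsplit : ∑ t ∈ Finset.Icc 1 T, ℓ t (x t - p)
      = ∑ t ∈ Finset.Icc 1 T, v t (x t - p) + ∑ t ∈ Finset.Icc 1 T, ε t (p - x t) := by
    rw [← Finset.sum_add_distrib]
    exact Finset.sum_congr rfl fun t _ => hfin t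
  have hmain := main T
  have hEn := Enonneg (T+1)
  rw [hsplit]
  linarith [hmain, hEn]
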